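/- Let A be a commutative ℂ-algebra together with elements x₁, …, xₙ ∈ A such that the Kähler differentials dx₁, …, dxₙ form an A-module basis of Ω_{A/ℂ} (an étale coordinate system). For a ∈ A define ∂ᵢ(a) ∈ A to be the i-th coordinate of da in this basis, so that da = Σᵢ ∂ᵢ(a)·dxᵢ. Let f₁, …, fₙ ∈ A satisfy the almost-closedness condition: for all i, j, the element ∂ⱼ(fᵢ) − ∂ᵢ(fⱼ) lies in the ideal (f₁, …, fₙ) generated by the fᵢ. Let K be a field equipped with a ℂ-algebra structure, let γ : A → K[[t]] be a ℂ-algebra homomorphism, and let m > 0 be an integer such that t^m divides γ(fᵢ) for all i. Then the following identity holds in the second exterior power Λ² Ω_{K/ℂ} of the module of Kähler differentials of K over ℂ: Σᵢ d(coefficient of t^0 in γ(xᵢ)) ∧ d(coefficient of t^m in γ(fᵢ)) = 0. -/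

import Mathlib

open ExteriorAlgebra
noncomputable section

variable (R S : Type*) [CommRing R] [CommRing S] [Algebra R S]

/-- Auxiliary module `Ω × ΛΩ` with a twisted `S`-action, used to realize the exterior
derivative `Ω¹ → Λ²Ω` (well-definedness). -/
structure DWedge where
  fst : KaehlerDifferential R S
  snd : ExteriorAlgebra S (KaehlerDifferential R S)

namespace DWedge
variable {R S}

@[ext] lemma ext' {p q : DWedge R S} (h1 : p.fst = q.fst) (h2 : p.snd = q.snd) : p = q := by
  cases p; cases q; simp_all

instance : Add (DWedge R S) := ⟨fun p q => ⟨p.fst + q.fst, p.snd + q.snd⟩⟩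
instance : Zero (DWedge R S) := ⟨⟨0, 0⟩⟩
instance : Neg (DWedge R S) := ⟨fun p => ⟨-p.fst, -p.snd⟩⟩

@[simp] lemma add_fst (p q : DWedge R S) : (p + q).fst = p.fst + q.fst := rfl
@[simp] lemma add_snd (p q : DWedge R S) : (p + q).snd = p.snd + q.snd := rfl
@[simp] lemma zero_fst : (0 : DWedge R S).fst = 0 := rfl
@[simp] lemma zero_snd : (0 : DWedge R S).snd = 0 := rfl
@[simp] lemma neg_fst (p : DWedge R S) : (-p).fst = -p.fst := rfl
@[simp] lemma neg_snd (p : DWedge R S) : (-p).snd = -p.snd := rfl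

instance : AddCommGroup (DWedge R S) where
  add_assoc a b c := by ext <;> simp [add_assoc]
  zero_add a := by ext <;> simp
  add_zero a := by ext <;> simp
  neg_add_cancel a := by ext <;> simp
  add_comm a b := by ext <;> simp [add_comm]
  nsmul := nsmulRec
  zsmul := zsmulRec

instance : SMul S (DWedge R S) :=
  ⟨fun a p => ⟨a • p.fst, a • p.snd + ι S (KaehlerDifferential.D R S a) * ι S p.fst⟩⟩

@[simp] lemma smul_fst (a : S) (p : DWedge R S) : (a • p).fst = a • p.fst := rfl
@[simp] lemma smul_snd (a : S) (p : DWedge R S) :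
    (a • p).snd = a • p.snd + ι S (KaehlerDifferential.D R S a) * ι S p.fst := rfl

instance : Module S (DWedge R S) where
  one_smul p := by ext <;> simp
  mul_smul a b p := by
    ext
    · simp [mul_smul]
    · simp only [smul_fst, smul_snd, Derivation.leibniz, map_add, LinearMap.map_smul,
        add_mul, smul_mul_assoc, mul_smul, smul_add, mul_smul_comm]
      abel
  smul_zero a := by ext <;> simp
  smul_add a p q := by
    ext
    · simp
    · simp only [smul_fst, smul_snd, add_fst, add_snd, map_add, smul_add, mul_add]
      abel
  add_smul a b p := by
    ext
    · simp [add_smul]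
    · simp only [smul_fst, smul_snd, add_fst, add_snd, map_add, add_smul, LinearMap.map_add, add_mul]
      abel
  zero_smul p := by ext <;> simp

end DWedge

namespace DWedge
variable {R S}

instance : Module R (DWedge R S) := Module.compHom _ (algebraMap R S)

lemma rsmul_def (r : R) (p : DWedge R S) : r • p = (algebraMap R S r) • p := rfl

instance : IsScalarTower R S (DWedge R S) :=
  ⟨fun r s p => by rw [Algebra.smul_def, rsmul_def, mul_smul]⟩

variable (R S) in
/-- The derivation `a ↦ (da, 0)` into `DWedge`. -/
noncomputable def derWedge : Derivation R S (DWedge R S) where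
  toFun a := ⟨KaehlerDifferential.D R S a, 0⟩
  map_add' a b := by ext <;> simp
  map_smul' r a := by
    have h : r • (⟨KaehlerDifferential.D R S a, 0⟩ : DWedge R S)
        = ⟨algebraMap R S r • KaehlerDifferential.D R S a, 0⟩ := by
      rw [rsmul_def]
      ext
      · exact smul_fst _ _
      · rw [smul_snd]
        simp
    dsimp only [RingHom.id_apply]
    rw [h]
    congr 1
    rw [(KaehlerDifferential.D R S).map_smul r a, algebraMap_smul]
  map_one_eq_zero' := by ext <;> simp
  leibniz' a b := by
    ext
    · simp only [add_fst, smul_fst]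
      exact Derivation.leibniz (KaehlerDifferential.D R S) a b
    · dsimp only [LinearMap.coe_mk, AddHom.coe_mk]
      simp only [add_snd, smul_snd, smul_zero, zero_add]
      exact (ι_add_mul_swap (R := S) (KaehlerDifferential.D R S a)
        (KaehlerDifferential.D R S b)).symm

@[simp] lemma derWedge_fst (a : S) : (derWedge R S a).fst = KaehlerDifferential.D R S a := rfl
@[simp] lemma derWedge_snd (a : S) : (derWedge R S a).snd = 0 := rfl

variable (R S) in
/-- `snd` as an additive monoid hom. -/
def sndHom : DWedge R S →+ ExteriorAlgebra S (KaehlerDifferential R S) where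
  toFun := snd
  map_zero' := rfl
  map_add' _ _ := rfl

/-- Key consequence of the well-definedness of the exterior derivative: a linear relation
`∑ Fᵢ • D cᵢ = 0` among exact 1-forms implies `∑ d cᵢ ∧ d Fᵢ = 0` in the exterior algebra. -/
theorem wedge_of_rel {n : ℕ} (F c : Fin n → S)
    (h : ∑ i, F i • KaehlerDifferential.D R S (c i) = 0) :
    ∑ i, ι S (KaehlerDifferential.D R S (c i)) * ι S (KaehlerDifferential.D R S (F i)) = 0 := by
  have h2 := congrArg (derWedge R S).liftKaehlerDifferential h
  rw [map_sum, map_zero] at h2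
  have h3 := congrArg (sndHom R S) h2
  rw [map_sum, map_zero] at h3
  simp only [LinearMap.map_smul, Derivation.liftKaehlerDifferential_comp_D] at h3
  have h4 : ∀ i : Fin n,
      (sndHom R S) (F i • derWedge R S (c i))
        = ι S (KaehlerDifferential.D R S (F i)) * ι S (KaehlerDifferential.D R S (c i)) := by
    intro i
    show (F i • derWedge R S (c i)).snd = _
    simp
  rw [Finset.sum_congr rfl (fun i _ => h4 i)] at h3
  have h5 : ∀ i : Fin n,
      ι S (KaehlerDifferential.D R S (c i)) * ι S (KaehlerDifferential.D R S (F i))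
        = - (ι S (KaehlerDifferential.D R S (F i)) * ι S (KaehlerDifferential.D R S (c i))) := by
    intro i
    have := ι_add_mul_swap (R := S) (KaehlerDifferential.D R S (c i))
      (KaehlerDifferential.D R S (F i))
    -- this : ιF*ιc + ιc*ιF = 0
    exact eq_neg_of_add_eq_zero_left this
  rw [Finset.sum_congr rfl (fun i _ => h5 i), Finset.sum_neg_distrib, h3, neg_zero]

end DWedge

namespace CoeffDerAux
variable {R K : Type*} [CommSemiring R] [CommRing K] [Algebra R K]

/-- Coefficientwise application of a derivation of `K` gives a derivation of `K⟦X⟧`. -/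
noncomputable def coeffDer (δ : Derivation R K K) :
    Derivation R (PowerSeries K) (PowerSeries K) where
  toFun g := PowerSeries.mk fun p => δ (PowerSeries.coeff p g)
  map_add' g h := by
    ext p
    simp
  map_smul' r g := by
    ext p
    simp only [PowerSeries.coeff_mk, RingHom.id_apply, PowerSeries.coeff_smul]
    exact δ.map_smul r _
  map_one_eq_zero' := by
    ext p
    dsimp only [LinearMap.coe_mk, AddHom.coe_mk]
    rw [PowerSeries.coeff_mk, map_zero, PowerSeries.coeff_one]
    split <;> simp
  leibniz' g h := by
    ext p
    dsimp only [LinearMap.coe_mk, AddHom.coe_mk]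
    rw [PowerSeries.coeff_mk, map_add, smul_eq_mul, smul_eq_mul, PowerSeries.coeff_mul,
      PowerSeries.coeff_mul, PowerSeries.coeff_mul]
    simp only [PowerSeries.coeff_mk, map_sum, Derivation.leibniz, smul_eq_mul]
    rw [Finset.sum_add_distrib]
    congr 1
    have := Finset.Nat.sum_antidiagonal_swap
      (n := p) (f := fun q : ℕ × ℕ => PowerSeries.coeff q.1 h * δ (PowerSeries.coeff q.2 g))
    simpa using this

@[simp] lemma coeffDer_coeff (δ : Derivation R K K) (g : PowerSeries K) (p : ℕ) :
    PowerSeries.coeff p (coeffDer δ g) = δ (PowerSeries.coeff p g) := by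
  simp [coeffDer]

end CoeffDerAux


open CoeffDerAux PowerSeries in
/-- **Formula (form) of Lemma 4.8.**
Let `A` be a `ℂ`-algebra with étale coordinates `x₁, …, xₙ` (so the `d xᵢ` form a basis of
`Ω_{A/ℂ}`) and let `f₁, …, fₙ ∈ A` satisfy the almost-closedness condition
`∂ⱼ fᵢ − ∂ᵢ fⱼ ∈ (f₁, …, fₙ)`.  If `γ : A → K[[t]]` is a `ℂ`-algebra homomorphism to power
series over a field `K` and `m > 0` is such that `t^m ∣ γ(fᵢ)` for all `i`, then
`Σᵢ d cᵢ^{(0)} ∧ d Fᵢ^{(m)} = 0` in `Λ² Ω_{K/ℂ}` (the degree-2 part `⋀[K]^2` of the exterior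
algebra of `Ω_{K/ℂ}`, in which the wedge `ω ∧ η` of two 1-forms is the product
`ι ω * ι η`); here `Fᵢ^{(m)}` is the `t^m`-coefficient of `γ(fᵢ)` and `cᵢ^{(0)}` the
constant coefficient of `γ(xᵢ)`. -/
theorem almost_closed_one_form_lagrangian_identity
    (A : Type) [CommRing A] [Algebra ℂ A] (n : ℕ) (x : Fin n → A)
    (b : Module.Basis (Fin n) A (KaehlerDifferential ℂ A))
    (hb : ∀ i, b i = KaehlerDifferential.D ℂ A (x i))
    (f : Fin n → A)
    (halmost : ∀ i j : Fin n,
      b.repr (KaehlerDifferential.D ℂ A (f i)) j - b.repr (KaehlerDifferential.D ℂ A (f j)) i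
        ∈ Ideal.span (Set.range f))
    (K : Type) [Field K] [Algebra ℂ K]
    (γ : A →ₐ[ℂ] PowerSeries K) (m : ℕ) (hm : 0 < m)
    (hdiv : ∀ i : Fin n, ∀ p : ℕ, p < m → PowerSeries.coeff p (γ (f i)) = 0) :
    ∑ i : Fin n,
        ι K (KaehlerDifferential.D ℂ K (PowerSeries.constantCoeff (γ (x i)))) *
          ι K (KaehlerDifferential.D ℂ K (PowerSeries.coeff m (γ (f i)))) =
      (0 : ExteriorAlgebra K (KaehlerDifferential ℂ K)) := by
  classical
  letI : Algebra A (PowerSeries K) := γ.toRingHom.toAlgebra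
  haveI : IsScalarTower ℂ A (PowerSeries K) :=
    IsScalarTower.of_algebraMap_eq fun c => (γ.commutes c).symm
  haveI : CharZero K := charZero_of_injective_algebraMap (algebraMap ℂ K).injective
  have halgmap : ∀ a : A, algebraMap A (PowerSeries K) a = γ a := fun _ => rfl
  -- the coordinates of `D (f i)` in the basis `d x j`
  set g : Fin n → Fin n → A :=
    fun i j => b.repr (KaehlerDifferential.D ℂ A (f i)) j with hgdef
  have hrel : ∀ i, KaehlerDifferential.D ℂ A (f i)
      = ∑ j, g i j • KaehlerDifferential.D ℂ A (x j) := by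
    intro i
    conv_lhs => rw [← b.sum_repr (KaehlerDifferential.D ℂ A (f i))]
    exact Finset.sum_congr rfl fun j _ => by rw [hb]
  -- elements of the ideal `(f)` have `γ`-coefficients vanishing below `m`
  have hI : ∀ w ∈ Ideal.span (Set.range f), ∀ q, q < m → PowerSeries.coeff q (γ w) = 0 := by
    intro w hw
    induction hw using Submodule.span_induction with
    | mem w hwmem =>
      obtain ⟨k, rfl⟩ := hwmem
      exact fun q hq => hdiv k q hq
    | zero => intro q hq; simp
    | add y z _ _ hy hz => intro q hq; rw [map_add, map_add, hy q hq, hz q hq, add_zero]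
    | smul a y _ hy =>
      intro q hq
      rw [smul_eq_mul, map_mul, PowerSeries.coeff_mul]
      refine Finset.sum_eq_zero fun p hp => ?_
      have hp2 : p.2 < m := by
        have := Finset.HasAntidiagonal.mem_antidiagonal.mp hp
        omega
      rw [hy p.2 hp2, mul_zero]
  -- the key linear relation `∑ Fᵢ • d cᵢ = 0` in `Ω_{K/ℂ}`
  have star : ∑ i : Fin n, PowerSeries.coeff m (γ (f i)) •
      KaehlerDifferential.D ℂ K (PowerSeries.constantCoeff (γ (x i))) = 0 := by
    rw [← Module.forall_dual_apply_eq_zero_iff K]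
    intro lam
    rw [map_sum]
    simp only [LinearMap.map_smul, smul_eq_mul]
    -- the two derivations of `K⟦X⟧`
    set δK : Derivation ℂ K K := lam.compDer (KaehlerDifferential.D ℂ K) with hδK
    have hδKapp : ∀ a : K, δK a = lam (KaehlerDifferential.D ℂ K a) := fun a => rfl
    set Dl : Derivation ℂ (PowerSeries K) (PowerSeries K) := coeffDer δK with hDl
    set Dt : Derivation ℂ (PowerSeries K) (PowerSeries K) :=
      (PowerSeries.derivative K).restrictScalars ℂ with hDt
    have hDtc : ∀ (u : ℕ) (gg : PowerSeries K),
        PowerSeries.coeff u (Dt gg) = PowerSeries.coeff (u + 1) gg * (u + 1) :=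
      fun u gg => PowerSeries.coeff_derivative gg u
    -- transport the relation `hrel` along `γ` using the two derivations
    have transport : ∀ (δ : Derivation ℂ (PowerSeries K) (PowerSeries K)) (i : Fin n),
        δ (γ (f i)) = ∑ j, γ (g i j) * δ (γ (x j)) := by
      intro δ i
      have h0 := congrArg (δ.compAlgebraMap A).liftKaehlerDifferential (hrel i)
      rw [map_sum] at h0
      simp only [Derivation.liftKaehlerDifferential_comp_D, LinearMap.map_smul] at h0
      simpa only [Derivation.compAlgebraMap_apply, halgmap, Algebra.smul_def] using h0
    -- the Wronskian-type 2-form coefficients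
    set W : Fin n → Fin n → PowerSeries K := fun j i =>
      Dt (γ (x j)) * Dl (γ (x i)) - Dt (γ (x i)) * Dl (γ (x j)) with hW
    have hWanti : ∀ i j, W i j = - W j i := by
      intro i j; rw [hW]; ring
    -- main power series identity
    have hQ : ∑ i, (Dt (γ (f i)) * Dl (γ (x i)) - Dt (γ (x i)) * Dl (γ (f i)))
        = ∑ i, ∑ j, γ (g i j) * W j i := by
      refine Finset.sum_congr rfl fun i _ => ?_
      rw [transport Dl i, transport Dt i, Finset.sum_mul, Finset.mul_sum,
        ← Finset.sum_sub_distrib]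
      refine Finset.sum_congr rfl fun j _ => ?_
      rw [hW]; ring
    -- coefficients of `Dl (γ (f i))` vanish below `m`
    have hDlf : ∀ (i : Fin n) (r : ℕ), r < m → PowerSeries.coeff r (Dl (γ (f i))) = 0 := by
      intro i r hr
      rw [hDl, coeffDer_coeff, hdiv i r hr, map_zero]
    -- the coefficient `m - 1` of the left side
    have hL : PowerSeries.coeff (m - 1)
        (∑ i, (Dt (γ (f i)) * Dl (γ (x i)) - Dt (γ (x i)) * Dl (γ (f i))))
        = (m : K) * ∑ i, PowerSeries.coeff m (γ (f i)) *
            lam (KaehlerDifferential.D ℂ K (PowerSeries.constantCoeff (γ (x i)))) := by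
      rw [map_sum, Finset.mul_sum]
      refine Finset.sum_congr rfl fun i _ => ?_
      rw [map_sub]
      have h2 : PowerSeries.coeff (m - 1) (Dt (γ (x i)) * Dl (γ (f i))) = 0 := by
        rw [PowerSeries.coeff_mul]
        refine Finset.sum_eq_zero fun p hp => ?_
        have hp2 : p.2 < m := by
          have := Finset.HasAntidiagonal.mem_antidiagonal.mp hp
          omega
        rw [hDlf i p.2 hp2, mul_zero]
      rw [h2, sub_zero, PowerSeries.coeff_mul]
      rw [Finset.sum_eq_single (m - 1, 0)]
      · rw [hDtc, hDl, coeffDer_coeff]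
        have hm1 : m - 1 + 1 = m := Nat.succ_pred_eq_of_pos hm
        rw [hm1, PowerSeries.coeff_zero_eq_constantCoeff, hδKapp]
        have hc : ((m - 1 : ℕ) : K) + 1 = (m : K) := by exact_mod_cast congrArg (Nat.cast : ℕ → K) hm1
        rw [hc]
        ring
      · intro p hp hne
        have hpa := Finset.HasAntidiagonal.mem_antidiagonal.mp hp
        have hp1 : p.1 < m - 1 := by
          rcases Nat.lt_or_ge p.1 (m - 1) with h | h
          · exact h
          · exfalso; apply hne
            have : p.1 = m - 1 := le_antisymm (by omega) h
            have : p.2 = 0 := by omega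
            exact Prod.ext (by omega) this
        rw [hDtc]
        have : p.1 + 1 < m := by omega
        rw [hdiv i (p.1 + 1) this, zero_mul, zero_mul]
      · intro habs
        exact absurd (Finset.HasAntidiagonal.mem_antidiagonal.mpr (by omega)) habs
    -- the coefficient `m - 1` of the right side vanishes
    have hR : PowerSeries.coeff (m - 1) (∑ i, ∑ j, γ (g i j) * W j i) = 0 := by
      have e1 : (∑ i, ∑ j, γ (g i j) * W j i) = ∑ i, ∑ j, - (γ (g j i) * W j i) := by
        rw [Finset.sum_comm]
        refine Finset.sum_congr rfl fun i _ => Finset.sum_congr rfl fun j _ => ?_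
        rw [hWanti i j]; ring
      have e2 : (∑ i, ∑ j, γ (g i j) * W j i) + (∑ i, ∑ j, - (γ (g j i) * W j i))
          = ∑ i : Fin n, ∑ j : Fin n, γ (g i j - g j i) * W j i := by
        rw [← Finset.sum_add_distrib]
        refine Finset.sum_congr rfl fun i _ => ?_
        rw [← Finset.sum_add_distrib]
        refine Finset.sum_congr rfl fun j _ => ?_
        rw [map_sub]; ring
      have e3 : PowerSeries.coeff (m - 1)
          (∑ i : Fin n, ∑ j : Fin n, γ (g i j - g j i) * W j i) = 0 := by
        rw [map_sum]
        refine Finset.sum_eq_zero fun i _ => ?_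
        rw [map_sum]
        refine Finset.sum_eq_zero fun j _ => ?_
        rw [PowerSeries.coeff_mul]
        refine Finset.sum_eq_zero fun p hp => ?_
        have hp1 : p.1 < m := by
          have := Finset.HasAntidiagonal.mem_antidiagonal.mp hp
          omega
        rw [hI _ (halmost i j) p.1 hp1, zero_mul]
      have e4 : PowerSeries.coeff (m - 1) (∑ i, ∑ j, γ (g i j) * W j i)
          + PowerSeries.coeff (m - 1) (∑ i, ∑ j, γ (g i j) * W j i) = 0 := by
        nth_rewrite 2 [e1]
        rw [← map_add, e2, e3]
      have e5 : (2 : K) * PowerSeries.coeff (m - 1) (∑ i, ∑ j, γ (g i j) * W j i) = 0 := by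
        rw [two_mul]; exact e4
      exact (mul_eq_zero.mp e5).resolve_left two_ne_zero
    -- combine
    have hfinal : (m : K) * ∑ i, PowerSeries.coeff m (γ (f i)) *
        lam (KaehlerDifferential.D ℂ K (PowerSeries.constantCoeff (γ (x i)))) = 0 := by
      rw [← hL, hQ, hR]
    have hmK : (m : K) ≠ 0 := Nat.cast_ne_zero.mpr hm.ne'
    exact (mul_eq_zero.mp hfinal).resolve_left hmK
  exact DWedge.wedge_of_rel (R := ℂ) (S := K)
    (fun i => PowerSeries.coeff m (γ (f i)))
    (fun i => PowerSeries.constantCoeff (γ (x i))) star
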